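/- Let n = p_1 ⋯ p_l be a Cunningham product, let N = C_n be the cyclic group of order n, let π be the set of primes dividing n, and let H be the unique Hall π-subgroup of Hol(N). If M ≤ Hol(N) is a subgroup whose induced action on N is transitive, then the action of M ∩ H on N is also transitive. -/

import Mathlib

/-- The holomorph `Hol(N) = N ⋊ Aut(N)` of a group `N`, with multiplication
`[η, α][μ, β] = [η α(μ), α β]`. -/
abbrev Hol (N : Type*) [Group N] : Type _ :=
  N ⋊[MonoidHom.id (MulAut N)] MulAut N

/-- The natural action of the holomorph on `N`: `[η, α] · x = η α(x)`. -/
def holSmul {N : Type*} [Group N] (g : Hol N) (x : N) : N :=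
  g.left * g.right x

/-- `H` is a Hall `π`-subgroup of `G`: its order is a product of primes in `π` and its
index is divisible by no prime in `π`. -/
def IsHallPiSubgroup {G : Type*} [Group G] (π : Set ℕ) (H : Subgroup G) : Prop :=
  (∀ q : ℕ, q.Prime → q ∣ Nat.card H → q ∈ π) ∧ ∀ q ∈ π, ¬ q ∣ H.index


namespace CPaux

open SemidirectProduct Multiplicative

variable {N : Type*} [Group N]

lemma holSmul_mul (g h : Hol N) (x : N) : holSmul (g * h) x = holSmul g (holSmul h x) := by
  simp only [holSmul, mul_left, mul_right, MonoidHom.id_apply, MulAut.mul_apply, map_mul,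
    mul_assoc]

lemma holSmul_one (x : N) : holSmul (1 : Hol N) x = x := by
  simp [holSmul, one_left, one_right]

instance holAction : MulAction (Hol N) N where
  smul := holSmul
  one_smul := holSmul_one
  mul_smul := holSmul_mul

lemma holSmul_def (g : Hol N) (x : N) : g • x = holSmul g x := rfl

lemma holSmul_inl (t x : N) : holSmul (inl t : Hol N) x = t * x := by
  simp [holSmul, left_inl, right_inl]

/-- The equiv underlying `Hol N`. -/
def holEquivProd : Hol N ≃ N × MulAut N where
  toFun g := (g.left, g.right)
  invFun x := ⟨x.1, x.2⟩
  left_inv g := rfl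
  right_inv x := rfl

section zmod

variable {n : ℕ}

lemma mulAut_apply (σ : MulAut (Multiplicative (ZMod n))) (x : ZMod n) :
    (σ (ofAdd x)).toAdd = (σ (ofAdd 1)).toAdd * x := by
  calc (σ (ofAdd x)).toAdd
      = (σ ((ofAdd (1 : ZMod n)) ^ (ZMod.cast x : ℤ))).toAdd := by
        rw [← ofAdd_zsmul, zsmul_one, ZMod.intCast_zmod_cast]
    _ = ((σ (ofAdd (1 : ZMod n))) ^ (ZMod.cast x : ℤ)).toAdd := by rw [map_zpow]
    _ = (ZMod.cast x : ℤ) • (σ (ofAdd (1 : ZMod n))).toAdd := by rw [toAdd_zpow]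
    _ = (σ (ofAdd 1)).toAdd * x := by
        rw [zsmul_eq_mul, ZMod.intCast_zmod_cast, mul_comm]

lemma mulAut_apply' (σ : MulAut (Multiplicative (ZMod n))) (y : Multiplicative (ZMod n)) :
    σ y = ofAdd ((σ (ofAdd 1)).toAdd * y.toAdd) := by
  rw [← mulAut_apply, ofAdd_toAdd, ofAdd_toAdd]

/-- Automorphisms of a cyclic group commute. -/
lemma mulAut_comm (σ τ : MulAut (Multiplicative (ZMod n))) : σ * τ = τ * σ := by
  apply MulEquiv.ext
  intro y
  have key : ∀ α β : MulAut (Multiplicative (ZMod n)),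
      (α * β) y = ofAdd ((α (ofAdd 1)).toAdd * ((β (ofAdd 1)).toAdd * y.toAdd)) := by
    intro α β
    rw [MulAut.mul_apply, mulAut_apply' β y, mulAut_apply' α, toAdd_ofAdd]
  rw [key, key]
  ring_nf

/-- The unit attached to an automorphism of `ZMod n`. -/
def autUnit (σ : MulAut (Multiplicative (ZMod n))) : (ZMod n)ˣ :=
  Units.mkOfMulEqOne (σ (ofAdd 1)).toAdd (σ⁻¹ (ofAdd 1)).toAdd <| by
    have h := mulAut_apply σ ((σ⁻¹ (ofAdd (1 : ZMod n))).toAdd)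
    rw [ofAdd_toAdd] at h
    have h2 : σ (σ⁻¹ (ofAdd (1 : ZMod n))) = ofAdd 1 := by simp
    rw [h2, toAdd_ofAdd] at h
    exact h.symm

@[simp] lemma autUnit_coe (σ : MulAut (Multiplicative (ZMod n))) :
    (autUnit σ : ZMod n) = (σ (ofAdd 1)).toAdd := rfl

/-- Automorphism attached to a unit. -/
def unitAut (u : (ZMod n)ˣ) : MulAut (Multiplicative (ZMod n)) :=
  AddEquiv.toMultiplicative (AddAut.mulLeft u)

@[simp] lemma unitAut_apply (u : (ZMod n)ˣ) (y : Multiplicative (ZMod n)) :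
    unitAut u y = ofAdd ((u : ZMod n) * y.toAdd) := rfl

/-- `MulAut (Multiplicative (ZMod n)) ≃* (ZMod n)ˣ`. -/
def autUnitsEquiv (n : ℕ) : MulAut (Multiplicative (ZMod n)) ≃* (ZMod n)ˣ where
  toFun := autUnit
  invFun := unitAut
  left_inv σ := by
    apply MulEquiv.ext
    intro y
    rw [unitAut_apply, autUnit_coe, ← mulAut_apply, ofAdd_toAdd, ofAdd_toAdd]
  right_inv u := by
    apply Units.ext
    rw [autUnit_coe, unitAut_apply, toAdd_ofAdd, toAdd_ofAdd, mul_one]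
  map_mul' σ τ := by
    apply Units.ext
    push_cast
    rw [autUnit_coe, autUnit_coe, autUnit_coe, MulAut.mul_apply,
      mulAut_apply' σ (τ (ofAdd 1)), toAdd_ofAdd]

instance finiteMulAutZMod (n : ℕ) [NeZero n] : Finite (MulAut (Multiplicative (ZMod n))) :=
  Finite.of_equiv _ (autUnitsEquiv n).toEquiv.symm

instance finiteHolZMod (n : ℕ) [NeZero n] : Finite (Hol (Multiplicative (ZMod n))) :=
  Finite.of_equiv _ holEquivProd.symm

lemma card_mulAut (n : ℕ) [NeZero n] :
    Nat.card (MulAut (Multiplicative (ZMod n))) = Nat.totient n := by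
  rw [Nat.card_congr (autUnitsEquiv n).toEquiv, Nat.card_eq_fintype_card,
    ZMod.card_units_eq_totient]

end zmod

end CPaux

namespace CPaux

open SemidirectProduct Multiplicative

section proj

variable {n m : ℕ} (hdvd : m ∣ n)

/-- Reduction map on the cyclic groups. -/
def redN (hdvd : m ∣ n) : Multiplicative (ZMod n) →* Multiplicative (ZMod m) :=
  AddMonoidHom.toMultiplicative (ZMod.castHom hdvd (ZMod m)).toAddMonoidHom

lemma redN_apply (x : Multiplicative (ZMod n)) :
    (redN hdvd x).toAdd = ZMod.castHom hdvd (ZMod m) x.toAdd := rfl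

lemma redN_surjective [NeZero m] : Function.Surjective (redN hdvd) := by
  intro y
  refine ⟨ofAdd ((y.toAdd.val : ZMod n)), ?_⟩
  apply Multiplicative.toAdd.injective
  rw [redN_apply, toAdd_ofAdd, map_natCast, ZMod.natCast_val, ZMod.cast_id]

/-- Reduction map on automorphism groups. -/
def redA (hdvd : m ∣ n) : MulAut (Multiplicative (ZMod n)) →* MulAut (Multiplicative (ZMod m)) :=
  ((autUnitsEquiv m).symm.toMonoidHom.comp
    (Units.map (ZMod.castHom hdvd (ZMod m)).toMonoidHom)).comp (autUnitsEquiv n).toMonoidHom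

lemma redA_apply (σ : MulAut (Multiplicative (ZMod n))) (y : Multiplicative (ZMod m)) :
    redA hdvd σ y = ofAdd (ZMod.castHom hdvd (ZMod m) ((σ (ofAdd 1)).toAdd) * y.toAdd) := rfl

/-- The reduction homomorphism between holomorphs. -/
def holMap (hdvd : m ∣ n) : Hol (Multiplicative (ZMod n)) →* Hol (Multiplicative (ZMod m)) :=
  SemidirectProduct.map (redN hdvd) (redA hdvd) <| by
    intro σ
    refine MonoidHom.ext fun x => ?_
    show redN hdvd (σ x) = redA hdvd σ (redN hdvd x)
    rw [redA_apply]
    apply Multiplicative.toAdd.injective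
    rw [redN_apply, toAdd_ofAdd, mulAut_apply' σ x, toAdd_ofAdd, map_mul, redN_apply]

lemma holMap_smul (g : Hol (Multiplicative (ZMod n))) (x : Multiplicative (ZMod n)) :
    holSmul (holMap hdvd g) (redN hdvd x) = redN hdvd (holSmul g x) := by
  have key : redA hdvd g.right (redN hdvd x) = redN hdvd (g.right x) := by
    rw [redA_apply]
    apply Multiplicative.toAdd.injective
    rw [toAdd_ofAdd, mulAut_apply' _ x, redN_apply, redN_apply, toAdd_ofAdd, map_mul]
  show redN hdvd g.left * redA hdvd g.right (redN hdvd x) = redN hdvd (g.left * g.right x)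
  rw [map_mul, key]

end proj
end CPaux

namespace CPaux

open SemidirectProduct Multiplicative

section piHall

lemma card_mult (n : ℕ) : Nat.card (Multiplicative (ZMod n)) = n := by
  rw [Nat.card_congr (Multiplicative.toAdd (α := ZMod n)), Nat.card_zmod]

/-- The set of `π`-elements of the holomorph, where `π` is the set of primes dividing `n`. -/
def piHall (n : ℕ) : Subgroup (Hol (Multiplicative (ZMod n))) where
  carrier := {g | ∀ q : ℕ, q.Prime → q ∣ orderOf (rightHom g) → q ∣ n}
  one_mem' := by
    intro q hq hdvd
    rw [map_one, orderOf_one, Nat.dvd_one] at hdvd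
    exact absurd hdvd hq.ne_one
  mul_mem' := by
    intro g h hg hh q hq hdvd
    rw [map_mul] at hdvd
    have hcomm : Commute (rightHom g) (rightHom h) := mulAut_comm _ _
    have h1 : orderOf (rightHom g * rightHom h) ∣
        Nat.lcm (orderOf (rightHom g)) (orderOf (rightHom h)) := hcomm.orderOf_mul_dvd_lcm
    have h2 : q ∣ orderOf (rightHom g) * orderOf (rightHom h) :=
      dvd_trans hdvd (h1.trans (Nat.lcm_dvd_mul _ _))
    rcases (Nat.Prime.dvd_mul hq).mp h2 with h3 | h3
    · exact hg q hq h3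
    · exact hh q hq h3
  inv_mem' := by
    intro g hg q hq hdvd
    rw [map_inv, orderOf_inv] at hdvd
    exact hg q hq hdvd

lemma mem_piHall_of_pi {n : ℕ} {g : Hol (Multiplicative (ZMod n))}
    (h : ∀ q : ℕ, q.Prime → q ∣ orderOf g → q ∣ n) : g ∈ piHall n := fun q hq hdvd =>
  h q hq (hdvd.trans (orderOf_map_dvd _ g))

lemma inl_mem_piHall {n : ℕ} (t : Multiplicative (ZMod n)) : inl t ∈ piHall n := by
  intro q hq hdvd
  rw [rightHom_inl, orderOf_one, Nat.dvd_one] at hdvd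
  exact absurd hdvd hq.ne_one

lemma pi_of_mem_piHall {n : ℕ} [NeZero n] {g : Hol (Multiplicative (ZMod n))}
    (hg : g ∈ piHall n) : ∀ q : ℕ, q.Prime → q ∣ orderOf g → q ∣ n := by
  intro q hq hdvd
  set k := orderOf (rightHom g) with hk
  have hker : g ^ k ∈ (rightHom : Hol (Multiplicative (ZMod n)) →* _).ker := by
    rw [MonoidHom.mem_ker, map_pow, pow_orderOf_eq_one]
  rw [← range_inl_eq_ker_rightHom] at hker
  obtain ⟨y, hy⟩ := hker
  have hordy : orderOf (g ^ k) = orderOf y := by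
    rw [← hy, orderOf_injective inl inl_injective]
  have hyn : orderOf y ∣ n := by
    have := orderOf_dvd_natCard y
    rwa [card_mult] at this
  have hgkn : orderOf g ∣ k * orderOf (g ^ k) := by
    apply orderOf_dvd_of_pow_eq_one
    rw [pow_mul, pow_orderOf_eq_one]
  have hq2 : q ∣ k * orderOf (g ^ k) := hdvd.trans hgkn
  rcases (Nat.Prime.dvd_mul hq).mp hq2 with h3 | h3
  · exact hg q hq h3
  · rw [hordy] at h3
    exact h3.trans hyn

/-- Any Hall `π`-subgroup equals `piHall n`. -/
lemma hall_eq_piHall (n : ℕ) [NeZero n] (H : Subgroup (Hol (Multiplicative (ZMod n))))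
    (hH : IsHallPiSubgroup {q : ℕ | q.Prime ∧ q ∣ n} H) : H = piHall n := by
  have hle : H ≤ piHall n := by
    intro g hg
    apply mem_piHall_of_pi
    intro q hq hdq
    have h1 : orderOf g ∣ Nat.card H := by
      rw [← Subgroup.orderOf_mk (H := H) g hg]
      exact orderOf_dvd_natCard _
    exact (hH.1 q hq (hdq.trans h1)).2
  have hrel : H.relIndex (piHall n) = 1 := by
    by_contra hne
    have hne0 : H.relIndex (piHall n) ≠ 0 := by
      rw [Subgroup.relIndex]
      exact Subgroup.index_ne_zero_of_finite
    obtain ⟨q, hq, hqdvd⟩ := Nat.exists_prime_and_dvd hne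
    have hqcard : q ∣ Nat.card (piHall n) := by
      refine hqdvd.trans ?_
      rw [Subgroup.relIndex]
      exact Subgroup.index_dvd_card _
    haveI : Fact q.Prime := ⟨hq⟩
    obtain ⟨x, hx⟩ := exists_prime_orderOf_dvd_card' (G := (piHall n)) q hqcard
    have hqn : q ∣ n := by
      refine pi_of_mem_piHall x.2 q hq ?_
      rw [Subgroup.orderOf_coe, hx]
    refine hH.2 q ⟨hq, hqn⟩ ?_
    refine hqdvd.trans ?_
    exact Dvd.intro _ (Subgroup.relIndex_mul_index hle)
  exact le_antisymm hle (Subgroup.relIndex_eq_one.mp hrel)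

end piHall

end CPaux

namespace CPaux

open SemidirectProduct Multiplicative

section trans

variable {n : ℕ}

/-- Transitivity gives that `n` divides the order of `M`. -/
lemma card_dvd_of_transitive [NeZero n] (M : Subgroup (Hol (Multiplicative (ZMod n))))
    (hM : ∀ a b : Multiplicative (ZMod n), ∃ g ∈ M, holSmul g a = b) :
    n ∣ Nat.card M := by
  haveI : MulAction.IsPretransitive M (Multiplicative (ZMod n)) := by
    constructor
    intro a b
    obtain ⟨g, hg, h⟩ := hM a b
    exact ⟨⟨g, hg⟩, h⟩
  have h1 := MulAction.index_stabilizer_of_transitive (↥M) (1 : Multiplicative (ZMod n))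
  rw [card_mult] at h1
  have h2 := Subgroup.index_dvd_card (MulAction.stabilizer (↥M) (1 : Multiplicative (ZMod n)))
  rwa [h1] at h2

/-- All translations with cast zero land in a transitive subgroup whose order is
divisible by `p`. -/
lemma inl_mem_of_orderOf_eq {p m : ℕ} [NeZero n] (hp : p.Prime) (hnm : n = p * m)
    (hdvd : m ∣ n) (hptot : ¬ p ∣ Nat.totient n) (hpm : ¬ p ∣ m)
    (M : Subgroup (Hol (Multiplicative (ZMod n)))) (hcard : p ∣ Nat.card M) :
    ∀ d : ZMod n, ZMod.castHom hdvd (ZMod m) d = 0 → inl (ofAdd d) ∈ M := by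
  haveI : NeZero m := ⟨by rintro rfl; rw [mul_zero] at hnm; exact (NeZero.ne n) hnm⟩
  haveI : Fact p.Prime := ⟨hp⟩
  obtain ⟨x, hx⟩ := exists_prime_orderOf_dvd_card' (G := M) p hcard
  set g : Hol (Multiplicative (ZMod n)) := (x : Hol (Multiplicative (ZMod n))) with hgdef
  have hg : g ∈ M := x.2
  have hordg : orderOf g = p := by rw [hgdef, Subgroup.orderOf_coe, hx]
  -- the automorphism part of g is trivial
  have hσ : rightHom g = 1 := by
    have h1 : orderOf (rightHom g) ∣ p := hordg ▸ orderOf_map_dvd _ g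
    have h2 : orderOf (rightHom g) ∣ Nat.totient n := by
      have := orderOf_dvd_natCard (rightHom g)
      rwa [card_mulAut] at this
    rcases (Nat.dvd_prime hp).mp h1 with h | h
    · exact orderOf_eq_one_iff.mp h
    · exact absurd (h ▸ h2) hptot
  have hginl : g = inl g.left := by
    conv_lhs => rw [← inl_left_mul_inr_right g]
    rw [show g.right = rightHom g from rfl, hσ, map_one, mul_one]
  set a₀ : ZMod n := g.left.toAdd with ha₀
  have hinla : inl (ofAdd a₀) ∈ M := by rwa [ha₀, ofAdd_toAdd, ← hginl]
  have horda : addOrderOf a₀ = p := by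
    rw [← orderOf_ofAdd_eq_addOrderOf, ha₀, ofAdd_toAdd, ← orderOf_injective
      (inl : Multiplicative (ZMod n) →* Hol (Multiplicative (ZMod n))) inl_injective,
      ← hginl, hordg]
  -- the kernel of the cast map
  set f := ZMod.castHom hdvd (ZMod m) with hf
  have hfsurj : Function.Surjective f := by
    intro y
    refine ⟨((y.val : ZMod n)), ?_⟩
    rw [hf, map_natCast, ZMod.natCast_val, ZMod.cast_id]
  set K := f.toAddMonoidHom.ker with hK
  have hcardK : Nat.card K = p := by
    have h1 : Nat.card (ZMod n) = Nat.card (ZMod n ⧸ K) * Nat.card K :=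
      AddSubgroup.card_eq_card_quotient_mul_card_addSubgroup K
    have h2 : Nat.card (ZMod n ⧸ K) = m := by
      rw [Nat.card_congr (QuotientAddGroup.quotientKerEquivOfSurjective
        f.toAddMonoidHom hfsurj).toEquiv, Nat.card_zmod]
    rw [Nat.card_zmod, h2] at h1
    have h3 : m * Nat.card K = m * p := by rw [← h1, hnm]; ring
    exact Nat.eq_of_mul_eq_mul_left (Nat.pos_of_ne_zero (NeZero.ne m)) h3
  have ha₀K : a₀ ∈ K := by
    have h1 : p • (f a₀) = 0 := by
      rw [← map_nsmul]
      have : p • a₀ = 0 := by rw [← horda]; exact addOrderOf_nsmul_eq_zero a₀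
      rw [this, map_zero]
    have h2 : addOrderOf (f a₀) ∣ p := addOrderOf_dvd_of_nsmul_eq_zero h1
    have h3 : addOrderOf (f a₀) ∣ m := by
      have := addOrderOf_dvd_natCard (f a₀)
      rwa [Nat.card_zmod] at this
    rcases (Nat.dvd_prime hp).mp h2 with h | h
    · exact AddMonoid.addOrderOf_eq_one_iff.mp h
    · exact absurd (h ▸ h3) hpm
  have hZK : AddSubgroup.zmultiples a₀ = K := by
    apply AddSubgroup.eq_of_le_of_card_ge (AddSubgroup.zmultiples_le_of_mem ha₀K)
    rw [hcardK, Nat.card_zmultiples, horda]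
  intro d hd
  have hdK : d ∈ K := hd
  rw [← hZK] at hdK
  obtain ⟨j, hj⟩ := hdK
  have hj' : j • a₀ = d := hj
  have : inl (ofAdd d) = (inl (ofAdd a₀) : Hol (Multiplicative (ZMod n))) ^ j := by
    rw [← map_zpow, ← ofAdd_zsmul, hj']
  rw [this]
  exact Subgroup.zpow_mem M hinla j

end trans

section pipart

/-- `π`-part extraction. -/
lemma pi_part_pow {G : Type*} [Group G] [Finite G] (g : G) (ho : orderOf g ≠ 0) (n : ℕ)
    (hn : n ≠ 0) :
    ∃ t : ℕ, t ≠ 0 ∧ (∀ q : ℕ, q.Prime → q ∣ orderOf (g ^ t) → q ∣ n) ∧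
      (∀ q : ℕ, q.Prime → q ∣ t → ¬ q ∣ n) := by
  set o := orderOf g with hodef
  set s := Nat.gcd o (n ^ o) with hs
  have hso : s ∣ o := Nat.gcd_dvd_left _ _
  refine ⟨o / s, ?_, ?_, ?_⟩
  · have : 0 < s := Nat.gcd_pos_of_pos_left _ (Nat.pos_of_ne_zero ho)
    exact (Nat.div_ne_zero_iff_of_dvd hso).mpr ⟨ho, this.ne'⟩
  · intro q hq hdvd
    have ht : o / s ∣ o := Nat.div_dvd_of_dvd hso
    have hord : orderOf (g ^ (o / s)) = s := by
      rw [orderOf_pow, ← hodef, Nat.gcd_eq_right ht, Nat.div_div_self hso ho]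
    rw [hord] at hdvd
    exact hq.dvd_of_dvd_pow (hdvd.trans (Nat.gcd_dvd_right _ _))
  · intro q hq hqt hqn
    have hspos : s ≠ 0 := (Nat.gcd_pos_of_pos_left _ (Nat.pos_of_ne_zero ho)).ne'
    -- q * s ∣ o
    have hqs : q * s ∣ o := by
      obtain ⟨u, hu⟩ := hqt
      refine ⟨u, ?_⟩
      conv_lhs => rw [← Nat.mul_div_cancel' hso]
      rw [hu]
      ring
    have hno : (n : ℕ) ^ o ≠ 0 := pow_ne_zero _ hn
    have hfact : s.factorization q = min (o.factorization q) (o * n.factorization q) := by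
      rw [hs, Nat.factorization_gcd ho hno, Finsupp.inf_apply, Nat.factorization_pow,
        Finsupp.smul_apply, smul_eq_mul, show ∀ a b : ℕ, a ⊓ b = min a b from fun _ _ => rfl]
    have hlt : s.factorization q < o.factorization q := by
      have h1 := (Nat.factorization_le_iff_dvd (mul_ne_zero hq.ne_zero hspos) ho).mpr hqs
      have h1q := Finsupp.le_def.mp h1 q
      rw [Nat.factorization_mul hq.ne_zero hspos, Finsupp.add_apply,
        Nat.Prime.factorization_self hq] at h1q
      omega
    have hsq : s.factorization q = o * n.factorization q := by omega
    have h1 : 1 ≤ n.factorization q := (Nat.Prime.factorization_pos_of_dvd hq hn hqn)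
    have hqo : q ^ o ∣ o := by
      calc q ^ o ∣ q ^ (s.factorization q) := pow_dvd_pow q (by nlinarith)
      _ ∣ s := Nat.ordProj_dvd s q
      _ ∣ o := hso
    have := Nat.le_of_dvd (Nat.pos_of_ne_zero ho) hqo
    have h2o : 2 ^ o ≤ q ^ o := Nat.pow_le_pow_left hq.two_le o
    have := Nat.lt_two_pow_self (n := o)
    omega

end pipart

end CPaux

namespace CPaux

open SemidirectProduct Multiplicative

section aux

lemma exists_zpow_eq {G : Type*} [Group G] (g : G) (t : ℕ) (h : Nat.Coprime t (orderOf g)) :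
    ∃ x : ℤ, (g ^ t) ^ x = g := by
  set r := orderOf g with hr
  refine ⟨Int.gcdA t r, ?_⟩
  have hb := Int.gcd_eq_gcd_ab (t : ℤ) (r : ℤ)
  have hg1 : Int.gcd (t : ℤ) (r : ℤ) = 1 := by
    rw [Int.gcd_natCast_natCast]
    exact h
  rw [hg1] at hb
  have hone : (t : ℤ) * Int.gcdA t r + (r : ℤ) * Int.gcdB t r = 1 := by
    push_cast at hb
    omega
  have hgr : g ^ ((r : ℤ) * Int.gcdB t r) = 1 := by
    rw [zpow_mul, zpow_natCast, pow_orderOf_eq_one, one_zpow]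
  calc (g ^ t) ^ Int.gcdA t r = g ^ ((t : ℤ) * Int.gcdA t r) := by
        rw [← zpow_natCast g t, ← zpow_mul]
    _ = g ^ ((t : ℤ) * Int.gcdA t r) * g ^ ((r : ℤ) * Int.gcdB t r) := by rw [hgr, mul_one]
    _ = g ^ ((t : ℤ) * Int.gcdA t r + (r : ℤ) * Int.gcdB t r) := by rw [zpow_add]
    _ = g := by rw [hone, zpow_one]

lemma totient_prod_primes (s : Finset ℕ) (f : ℕ → ℕ) (hf : ∀ i ∈ s, (f i).Prime)
    (hinj : ∀ i ∈ s, ∀ j ∈ s, f i = f j → i = j) :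
    Nat.totient (∏ i ∈ s, f i) = ∏ i ∈ s, (f i - 1) := by
  induction s using Finset.induction_on with
  | empty => simp
  | @insert a s' ha ih =>
    have hfa : (f a).Prime := hf a (Finset.mem_insert_self a s')
    have hcop : Nat.Coprime (f a) (∏ i ∈ s', f i) := by
      apply Nat.Coprime.prod_right
      intro i hi
      refine (Nat.coprime_primes hfa (hf i (Finset.mem_insert_of_mem hi))).mpr ?_
      intro hEq
      exact ha (hinj a (Finset.mem_insert_self a s') i (Finset.mem_insert_of_mem hi) hEq ▸ hi)
    rw [Finset.prod_insert ha, Finset.prod_insert ha, Nat.totient_mul hcop,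
      Nat.totient_prime hfa,
      ih (fun i hi => hf i (Finset.mem_insert_of_mem hi))
        (fun i hi j hj => hinj i (Finset.mem_insert_of_mem hi) j (Finset.mem_insert_of_mem hj))]

lemma chain_mono {l : ℕ} {p : ℕ → ℕ}
    (hchain : ∀ i, 1 ≤ i → i < l → p i = 2 * p (i + 1) + 1) :
    ∀ i j, 1 ≤ i → i ≤ j → j ≤ l → p j ≤ p i := by
  intro i j h1 hij hjl
  induction j, hij using Nat.le_induction with
  | base => exact le_refl _
  | succ j hij ih =>
    have h2 := hchain j (by omega) (by omega)
    have h3 := ih (by omega)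
    omega

lemma chain_strict {l : ℕ} {p : ℕ → ℕ}
    (hchain : ∀ i, 1 ≤ i → i < l → p i = 2 * p (i + 1) + 1) :
    ∀ i j, 1 ≤ i → i < j → j ≤ l → p j < p i := by
  intro i j h1 hij hjl
  have h2 := chain_mono hchain (i + 1) j (by omega) (by omega) hjl
  have h3 := hchain i (by omega) (by omega)
  omega

end aux

end CPaux

namespace CPaux

open SemidirectProduct Multiplicative

theorem key : ∀ (l : ℕ) (p : ℕ → ℕ),
    (∀ i, 1 ≤ i → i ≤ l → (p i).Prime) →
    (∀ i, 1 ≤ i → i < l → p i = 2 * p (i + 1) + 1) →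
    ∀ n : ℕ, n = ∏ i ∈ Finset.Icc 1 l, p i →
    ∀ M : Subgroup (Hol (Multiplicative (ZMod n))),
    (∀ a b : Multiplicative (ZMod n), ∃ g ∈ M, holSmul g a = b) →
    ∀ a b : Multiplicative (ZMod n), ∃ g ∈ M ⊓ piHall n, holSmul g a = b := by
  intro l
  induction l with
  | zero =>
    intro p hprime hchain n hn M hM a b
    have hn1 : n = 1 := by simpa using hn
    subst hn1
    refine ⟨1, Subgroup.one_mem _, ?_⟩
    rw [holSmul_one]
    exact Subsingleton.elim a b
  | succ l ih =>
    intro p hprime hchain n hn M hM a b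
    set m := ∏ i ∈ Finset.Icc 2 (l + 1), p i with hm
    have hicc : Finset.Icc 1 (l + 1) = insert 1 (Finset.Icc 2 (l + 1)) := by
      ext x
      simp only [Finset.mem_Icc, Finset.mem_insert]
      omega
    have hsplit : n = p 1 * m := by
      rw [hn, hicc, Finset.prod_insert (by simp [Finset.mem_Icc])]
    have hp1 : (p 1).Prime := hprime 1 le_rfl (by omega)
    have hmpos : 0 < m := by
      apply Finset.prod_pos
      intro i hi
      rw [Finset.mem_Icc] at hi
      exact (hprime i (by omega) (by omega)).pos
    have hnpos : 0 < n := by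
      rw [hsplit]
      exact Nat.mul_pos hp1.pos hmpos
    haveI : NeZero n := ⟨hnpos.ne'⟩
    haveI : NeZero m := ⟨hmpos.ne'⟩
    have hdvd : m ∣ n := ⟨p 1, by rw [hsplit]; ring⟩
    have hdec : ∀ i j, 1 ≤ i → i < j → j ≤ l + 1 → p j < p i := chain_strict hchain
    -- p 1 does not divide the totient of n
    have htot : Nat.totient n = ∏ i ∈ Finset.Icc 1 (l + 1), (p i - 1) := by
      rw [hn]
      apply totient_prod_primes
      · intro i hi
        rw [Finset.mem_Icc] at hi
        exact hprime i hi.1 hi.2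
      · intro i hi j hj hEq
        rw [Finset.mem_Icc] at hi hj
        by_contra hne
        rcases Nat.lt_or_ge i j with h | h
        · exact absurd hEq (hdec i j hi.1 h hj.2).ne'
        · have : j < i := by omega
          exact absurd hEq.symm (hdec j i hj.1 this hi.2).ne'
    have hptot : ¬ p 1 ∣ Nat.totient n := by
      rw [htot]
      intro hdq
      obtain ⟨i, hi, hdvd'⟩ := (Prime.dvd_finset_prod_iff hp1.prime _).mp hdq
      rw [Finset.mem_Icc] at hi
      have hple : p i ≤ p 1 := by
        rcases Nat.eq_or_lt_of_le hi.1 with h | h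
        · rw [← h]
        · exact (hdec 1 i le_rfl h hi.2).le
      have hpp : 2 ≤ p i := (hprime i hi.1 hi.2).two_le
      have := Nat.le_of_dvd (by omega) hdvd'
      omega
    have hpm : ¬ p 1 ∣ m := by
      intro hdq
      rw [hm] at hdq
      obtain ⟨i, hi, h2⟩ := (Prime.dvd_finset_prod_iff hp1.prime _).mp hdq
      rw [Finset.mem_Icc] at hi
      have : p 1 = p i :=
        (Nat.prime_dvd_prime_iff_eq hp1 (hprime i (by omega) hi.2)).mp h2
      have := hdec 1 i le_rfl (by omega) hi.2
      omega
    have hcardM : p 1 ∣ Nat.card M :=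
      dvd_trans ⟨m, hsplit⟩ (card_dvd_of_transitive M hM)
    have htrans_mem := inl_mem_of_orderOf_eq hp1 hsplit hdvd hptot hpm M hcardM
    -- the image of M in the holomorph mod m
    set Φ := holMap hdvd with hΦ
    set M' := M.map Φ with hM'def
    have hM'trans : ∀ a b : Multiplicative (ZMod m), ∃ g ∈ M', holSmul g a = b := by
      intro c e
      obtain ⟨c', hc'⟩ := redN_surjective hdvd c
      obtain ⟨e', he'⟩ := redN_surjective hdvd e
      obtain ⟨g, hg, hgs⟩ := hM c' e'
      refine ⟨Φ g, Subgroup.mem_map_of_mem Φ hg, ?_⟩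
      rw [← hc', hΦ, holMap_smul, hgs, he']
    have hmprod : m = ∏ i ∈ Finset.Icc 1 l, p (i + 1) := by
      rw [hm, ← Finset.map_add_right_Icc 1 l 1, Finset.prod_map]
      rfl
    have hIH := ih (fun i => p (i + 1)) (fun i h1 h2 => hprime (i + 1) (by omega) (by omega))
      (fun i h1 h2 => hchain (i + 1) (by omega) (by omega)) m hmprod M' hM'trans
      (redN hdvd a) (redN hdvd b)
    obtain ⟨g', hg'mem, hg's⟩ := hIH
    rw [Subgroup.mem_inf] at hg'mem
    obtain ⟨hg'M', hg'pi⟩ := hg'mem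
    obtain ⟨g₀, hg₀M, hg₀eq⟩ := Subgroup.mem_map.mp hg'M'
    -- extract the π-part of g₀
    obtain ⟨t, ht0, htpi, htcop⟩ := pi_part_pow g₀ (orderOf_pos g₀).ne' n (NeZero.ne n)
    have hg₁M : g₀ ^ t ∈ M := pow_mem hg₀M t
    have hg₁pi : g₀ ^ t ∈ piHall n := mem_piHall_of_pi htpi
    have hcop : Nat.Coprime t (orderOf g') := by
      by_contra h
      obtain ⟨q, hq, hqd⟩ := Nat.exists_prime_and_dvd h
      have hqt : q ∣ t := hqd.trans (Nat.gcd_dvd_left _ _)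
      have hqr : q ∣ orderOf g' := hqd.trans (Nat.gcd_dvd_right _ _)
      have hqm : q ∣ m := pi_of_mem_piHall hg'pi q hq hqr
      exact htcop q hq hqt (hqm.trans hdvd)
    obtain ⟨x, hx⟩ := exists_zpow_eq g' t hcop
    set g₂ := (g₀ ^ t) ^ x with hg₂
    have hg₂M : g₂ ∈ M := Subgroup.zpow_mem M hg₁M x
    have hg₂pi : g₂ ∈ piHall n := Subgroup.zpow_mem _ hg₁pi x
    have hΦg₂ : Φ g₂ = g' := by
      rw [hg₂, map_zpow, map_pow, hg₀eq, hx]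
    have hred : redN hdvd (holSmul g₂ a) = redN hdvd b := by
      rw [← holMap_smul, hΦg₂, hg's]
    set d : ZMod n := (toAdd b) - (toAdd (holSmul g₂ a)) with hd
    have hdzero : ZMod.castHom hdvd (ZMod m) d = 0 := by
      have h1 : (redN hdvd (holSmul g₂ a)).toAdd = (redN hdvd b).toAdd := by rw [hred]
      rw [redN_apply, redN_apply] at h1
      rw [hd, map_sub, h1, sub_self]
    have htr : inl (ofAdd d) ∈ M := htrans_mem d hdzero
    refine ⟨inl (ofAdd d) * g₂, ?_, ?_⟩
    · rw [Subgroup.mem_inf]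
      exact ⟨M.mul_mem htr hg₂M, (piHall n).mul_mem (inl_mem_piHall _) hg₂pi⟩
    · rw [holSmul_mul, holSmul_inl]
      apply Multiplicative.toAdd.injective
      rw [toAdd_mul, toAdd_ofAdd, hd]
      ring

end CPaux

/-- Let `n = p₁ ⋯ p_l` be a Cunningham product, `N = C_n`, `π` the set of primes dividing
`n`, and `H` the (unique) Hall `π`-subgroup of `Hol(N)`.  If `M ≤ Hol(N)` acts
transitively on `N`, then `M ⊓ H` also acts transitively on `N`. -/
theorem inf_hall_transitive_of_transitive
    (l : ℕ) (hl : 1 ≤ l) (p : ℕ → ℕ)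
    (hprime : ∀ i, 1 ≤ i → i ≤ l → (p i).Prime)
    (hodd : ∀ i, 1 ≤ i → i ≤ l → Odd (p i))
    (hchain : ∀ i, 1 ≤ i → i < l → p i = 2 * p (i + 1) + 1)
    (n : ℕ) (hn : n = ∏ i ∈ Finset.Icc 1 l, p i)
    (H : Subgroup (Hol (Multiplicative (ZMod n))))
    (hH : IsHallPiSubgroup {q : ℕ | q.Prime ∧ q ∣ n} H)
    (M : Subgroup (Hol (Multiplicative (ZMod n))))
    (hM : ∀ a b : Multiplicative (ZMod n), ∃ g ∈ M, holSmul g a = b) :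
    ∀ a b : Multiplicative (ZMod n), ∃ g ∈ M ⊓ H, holSmul g a = b := by
  haveI : NeZero n := ⟨by
    rw [hn]
    refine (Finset.prod_pos fun i hi => ?_).ne'
    rw [Finset.mem_Icc] at hi
    exact (hprime i hi.1 hi.2).pos⟩
  rw [CPaux.hall_eq_piHall n H hH]
  exact CPaux.key l p hprime hchain n hn M hM
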